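/- arXiv:1402.3241 — 5 statements merged into one kernel-verified Lean document; each statement's English description precedes it below -/
import Mathlib

section
/- Let k be a field of characteristic 2 and let f in k[x,y] be irreducible with nonzero constant term, such that ∂f/∂y is not divisible by f and f has at least one monomial x^i y^j with both i and j odd. Suppose there exist polynomials H, G, α in k[x,y] with f not dividing H such that H^2 * x * y * (∂f/∂y) + α * f = G^2. Then a contradiction follows; i.e., x*y*(∂f/∂y) is not a square modulo the ideal generated by f in the stated sense. -/
open MvPolynomial

set_option linter.unusedSectionVars false

section Aux

variable {k : Type*} [Field k] [CharP k 2]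

private lemma htwo2 : (2 : MvPolynomial (Fin 2) k) = 0 := by
  have : ((2 : ℕ) : MvPolynomial (Fin 2) k) = 0 := CharP.cast_eq_zero _ 2
  simpa using this

private lemma pderiv_sq (i : Fin 2) (p : MvPolynomial (Fin 2) k) :
    pderiv i (p ^ 2) = 0 := by
  rw [pderiv_pow, Nat.cast_ofNat, htwo2, zero_mul, zero_mul]

private lemma pderiv_pderiv_self (i : Fin 2) (p : MvPolynomial (Fin 2) k) :
    pderiv i (pderiv i p) = 0 := by
  induction p using MvPolynomial.induction_on with
  | C a => simp
  | add p q hp hq => simp [hp, hq]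
  | mul_X p j hp =>
    by_cases h : j = i
    · rw [h, pderiv_mul, pderiv_X_self, mul_one, map_add, pderiv_mul, pderiv_X_self, mul_one,
        hp, zero_mul, zero_add]
      linear_combination (pderiv i p) * (htwo2 (k := k))
    · rw [pderiv_mul, pderiv_X_of_ne h, map_add, pderiv_mul, pderiv_X_of_ne h, hp]
      simp

private lemma support_pderiv_subset (i : Fin 2) (p : MvPolynomial (Fin 2) k) :
    (pderiv i p).support ⊆ p.support.image (fun m => m - Finsupp.single i 1) := by
  classical
  intro m hm
  have hrep : pderiv i p =
      ∑ m' ∈ p.support, monomial (m' - Finsupp.single i 1) (coeff m' p * (m' i : k)) := by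
    conv_lhs => rw [p.as_sum]
    rw [map_sum]
    simp [pderiv_monomial]
  rw [hrep] at hm
  obtain ⟨m', hm', hmem⟩ := Finset.mem_biUnion.mp (support_sum hm)
  have : m = m' - Finsupp.single i 1 := Finset.mem_singleton.mp (support_monomial_subset hmem)
  exact Finset.mem_image.mpr ⟨m', hm', this.symm⟩

private lemma degreeOf_pderiv_le (i j : Fin 2) (p : MvPolynomial (Fin 2) k) :
    degreeOf j (pderiv i p) ≤ degreeOf j p := by
  rw [degreeOf_le_iff]
  intro m hm
  obtain ⟨m', hm', rfl⟩ := Finset.mem_image.mp (support_pderiv_subset i p hm)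
  have h1 : (m' - Finsupp.single i 1 : Fin 2 →₀ ℕ) j ≤ m' j := by
    rw [Finsupp.tsub_apply]; omega
  exact h1.trans (monomial_le_degreeOf j hm')

private lemma degreeOf_pderiv_self_le (i : Fin 2) (p : MvPolynomial (Fin 2) k) :
    degreeOf i (pderiv i p) ≤ degreeOf i p - 1 := by
  rw [degreeOf_le_iff]
  intro m hm
  obtain ⟨m', hm', rfl⟩ := Finset.mem_image.mp (support_pderiv_subset i p hm)
  have h1 : (m' - Finsupp.single i 1 : Fin 2 →₀ ℕ) i = m' i - 1 := by
    rw [Finsupp.tsub_apply, Finsupp.single_eq_same]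
  have h2 : m' i ≤ degreeOf i p := monomial_le_degreeOf i hm'
  omega

end Aux

/-- Let `k` be a field of characteristic 2 and `f ∈ k[x,y]` irreducible with
nonzero constant term, with `f ∤ ∂f/∂y`, and having a monomial `x^i y^j` with
`i, j` both odd.  Then there are no `H, G, α` with `f ∤ H` and
`H² · x · y · ∂f/∂y + α f = G²`. -/
theorem statement3 (k : Type*) [Field k] [CharP k 2]
    (f : MvPolynomial (Fin 2) k) (hirr : Irreducible f)
    (hconst : coeff 0 f ≠ 0)
    (hdy : ¬ f ∣ pderiv 1 f)
    (hodd : ∃ m ∈ f.support, Odd (m 0) ∧ Odd (m 1))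
    (H G α : MvPolynomial (Fin 2) k) (hH : ¬ f ∣ H)
    (heq : H ^ 2 * X 0 * X 1 * pderiv 1 f + α * f = G ^ 2) :
    False := by
  classical
  have h2z : (2 : MvPolynomial (Fin 2) k) = 0 := htwo2
  have hprime : Prime f := UniqueFactorizationMonoid.irreducible_iff_prime.mp hirr
  have hfne : f ≠ 0 := hirr.ne_zero
  have h01 : (0 : Fin 2) ≠ 1 := by decide
  have h10 : (1 : Fin 2) ≠ 0 := by decide
  -- differentiate in y
  have e1 := congrArg (pderiv 1) heq
  simp only [map_add, pderiv_mul, pderiv_sq, pderiv_X_self, pderiv_X_of_ne h01,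
    pderiv_pderiv_self, mul_zero, zero_mul, add_zero, zero_add, mul_one] at e1
  have hdiv1 : f ∣ (H ^ 2 * X 0 + α) * pderiv 1 f := by
    refine ⟨pderiv 1 α, ?_⟩
    linear_combination e1 - (pderiv 1 α * f) * h2z
  obtain ⟨β, hβ⟩ := (hprime.2.2 _ _ hdiv1).resolve_right hdy
  have hα : α = f * β - H ^ 2 * X 0 := by linear_combination hβ
  -- differentiate in x
  have e0 := congrArg (pderiv 0) heq
  simp only [map_add, pderiv_mul, pderiv_sq, pderiv_X_self, pderiv_X_of_ne h10,
    mul_zero, zero_mul, add_zero, zero_add, mul_one] at e0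
  have hα0 : pderiv 0 α = pderiv 0 f * β + f * pderiv 0 β - H ^ 2 := by
    rw [hα, map_sub, pderiv_mul, pderiv_mul, pderiv_sq, pderiv_X_self]
    ring
  set A2 : MvPolynomial (Fin 2) k :=
    f + X 0 * pderiv 0 f + X 1 * pderiv 1 f + X 0 * X 1 * pderiv 0 (pderiv 1 f) with hA2def
  have hfin : H ^ 2 * A2 = f ^ 2 * pderiv 0 β := by
    rw [hA2def]
    linear_combination e0 - f * hα0 - pderiv 0 f * hα +
      (H ^ 2 * f + H ^ 2 * X 0 * pderiv 0 f - f ^ 2 * pderiv 0 β - f * pderiv 0 f * β) * h2z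
  -- A2 is nonzero
  have hA2ne : A2 ≠ 0 := by
    intro h
    apply hconst
    have hc := congrArg constantCoeff h
    rw [hA2def] at hc
    simpa [constantCoeff_X, ← constantCoeff_eq] using hc
  -- f^2 divides A2
  have hfH : ¬ f ∣ H ^ 2 := fun hd => hH (hprime.dvd_of_dvd_pow hd)
  have h1 : f ∣ A2 := by
    have hd : f ∣ H ^ 2 * A2 := ⟨f * pderiv 0 β, by linear_combination hfin⟩
    exact (hprime.2.2 _ _ hd).resolve_left hfH
  obtain ⟨u, hu⟩ := h1
  have h2 : f ∣ u := by
    have hcanc : H ^ 2 * u = f * pderiv 0 β := by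
      have hmul : f * (H ^ 2 * u) = f * (f * pderiv 0 β) := by
        rw [hu] at hfin; linear_combination hfin
      exact mul_left_cancel₀ hfne hmul
    exact (hprime.2.2 _ _ ⟨pderiv 0 β, hcanc⟩).resolve_left hfH
  obtain ⟨w, hw⟩ := h2
  have hwne : w ≠ 0 := by
    rintro rfl
    rw [hw, mul_zero] at hu
    exact hA2ne (by rw [hu, mul_zero])
  -- degree bounds
  obtain ⟨m, hm, hm0, hm1⟩ := hodd
  have hd1 : 1 ≤ degreeOf 0 f := le_trans hm0.pos (monomial_le_degreeOf 0 hm)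
  have hA2d : degreeOf 0 A2 ≤ degreeOf 0 f := by
    have t2 : degreeOf 0 (X 0 * pderiv 0 f : MvPolynomial (Fin 2) k) ≤ degreeOf 0 f := by
      refine (degreeOf_mul_le _ _ _).trans ?_
      have := degreeOf_pderiv_self_le (k := k) 0 f
      have hx : degreeOf 0 (X 0 : MvPolynomial (Fin 2) k) = 1 := by
        rw [degreeOf_X]; simp
      omega
    have t3 : degreeOf 0 (X 1 * pderiv 1 f : MvPolynomial (Fin 2) k) ≤ degreeOf 0 f := by
      refine (degreeOf_mul_le _ _ _).trans ?_
      have := degreeOf_pderiv_le (k := k) 1 0 f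
      have hx : degreeOf 0 (X 1 : MvPolynomial (Fin 2) k) = 0 := by
        rw [degreeOf_X]; simp
      omega
    have t4 : degreeOf 0 (X 0 * X 1 * pderiv 0 (pderiv 1 f) : MvPolynomial (Fin 2) k) ≤
        degreeOf 0 f := by
      refine (degreeOf_mul_le _ _ _).trans ?_
      have h5 : degreeOf 0 (pderiv 0 (pderiv 1 f)) ≤ degreeOf 0 f - 1 :=
        (degreeOf_pderiv_self_le 0 (pderiv 1 f)).trans
          (Nat.sub_le_sub_right (degreeOf_pderiv_le 1 0 f) 1)
      have h6 : degreeOf 0 (X 0 * X 1 : MvPolynomial (Fin 2) k) ≤ 1 := by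
        refine (degreeOf_mul_le _ _ _).trans ?_
        have hx0 : degreeOf 0 (X 0 : MvPolynomial (Fin 2) k) = 1 := by rw [degreeOf_X]; simp
        have hx1 : degreeOf 0 (X 1 : MvPolynomial (Fin 2) k) = 0 := by rw [degreeOf_X]; simp
        omega
      omega
    rw [hA2def]
    refine le_trans (degreeOf_add_le _ _ _) ?_
    refine max_le (le_trans (degreeOf_add_le _ _ _) ?_) t4
    refine max_le (le_trans (degreeOf_add_le _ _ _) ?_) t3
    exact max_le le_rfl t2
  -- transfer degrees through finSuccEquiv and conclude
  have hAw : A2 = f * (f * w) := by rw [hu, hw]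
  have hfe : (finSuccEquiv k 1) f ≠ 0 := by
    intro h
    apply hfne
    have h' := congrArg (finSuccEquiv k 1).symm h
    simpa using h'
  have hwe : (finSuccEquiv k 1) w ≠ 0 := by
    intro h
    apply hwne
    have h' := congrArg (finSuccEquiv k 1).symm h
    simpa using h'
  have hdeg : degreeOf 0 A2 = degreeOf 0 f + (degreeOf 0 f + ((finSuccEquiv k 1) w).natDegree) := by
    rw [← natDegree_finSuccEquiv, ← natDegree_finSuccEquiv, hAw, map_mul, map_mul]
    rw [Polynomial.natDegree_mul hfe (mul_ne_zero hfe hwe),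
      Polynomial.natDegree_mul hfe hwe]
  omega
end

section
/- Let k be a field and P, Q in k[x] two polynomials. The corank of the Sylvester matrix of P and Q (for given degree bounds equal to their degrees) equals the degree of gcd(P,Q). -/
open Polynomial Matrix

private lemma aux_mul_eq_sum {R : Type*} [CommRing R] (A P : R[X]) (n : ℕ)
    (hA : A.degree < (n : ℕ)) :
    A * P = ∑ i ∈ Finset.range n, A.coeff i • (P * X ^ i) := by
  by_cases h0 : A = 0
  · simp [h0]
  · have hd : A.natDegree < n := (natDegree_lt_iff_degree_lt h0).mpr hA
    conv_lhs => rw [A.as_sum_range' n hd]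
    rw [Finset.sum_mul]
    refine Finset.sum_congr rfl fun i _ => ?_
    rw [← smul_X_eq_monomial, smul_mul_assoc, mul_comm (X ^ i) P]

/-- The corank of the Sylvester matrix of two polynomials `P` (degree `m`) and
`Q` (degree `n`) over a field equals the degree of `gcd(P,Q)`.  The Sylvester
matrix is the `(m+n) × (m+n)` matrix whose first `n` rows are shifted
coefficient vectors of `P` and whose last `m` rows are shifted coefficient
vectors of `Q`. -/
theorem statement4 (k : Type*) [Field k] [DecidableEq k]
    (m n : ℕ) (P Q : k[X]) (hP : P ≠ 0) (hQ : Q ≠ 0)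
    (hPm : P.natDegree = m) (hQn : Q.natDegree = n)
    (S : Matrix (Fin (m + n)) (Fin (m + n)) k)
    (hS : ∀ i j : Fin (m + n),
      S i j = if (i : ℕ) < n
        then (if (i : ℕ) ≤ (j : ℕ) then P.coeff ((j : ℕ) - (i : ℕ)) else 0)
        else (if (i : ℕ) - n ≤ (j : ℕ) then Q.coeff ((j : ℕ) - ((i : ℕ) - n)) else 0)) :
    (m + n) - S.rank = (EuclideanDomain.gcd P Q).natDegree := by
  classical
  set g := EuclideanDomain.gcd P Q with hgdef
  have hg0 : g ≠ 0 := fun h => hP (EuclideanDomain.gcd_eq_zero_iff.1 h).1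
  set d := g.natDegree with hd
  obtain ⟨p, hp⟩ : g ∣ P := EuclideanDomain.gcd_dvd_left P Q
  obtain ⟨q, hq⟩ : g ∣ Q := EuclideanDomain.gcd_dvd_right P Q
  have hp0 : p ≠ 0 := fun h => hP (by rw [hp, h, mul_zero])
  have hq0 : q ≠ 0 := fun h => hQ (by rw [hq, h, mul_zero])
  have hdegP : d + p.natDegree = m := by rw [← hPm, hp, natDegree_mul hg0 hp0]
  have hdegQ : d + q.natDegree = n := by rw [← hQn, hq, natDegree_mul hg0 hq0]
  -- coprimality of the cofactors, via Bézout
  have h1 : p * EuclideanDomain.gcdA P Q + q * EuclideanDomain.gcdB P Q = 1 := by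
    apply mul_left_cancel₀ hg0
    have hb := EuclideanDomain.gcd_eq_gcd_ab P Q
    rw [mul_one]
    linear_combination -hb - EuclideanDomain.gcdA P Q * hp - EuclideanDomain.gcdB P Q * hq
  have hcop : IsCoprime p q := ⟨EuclideanDomain.gcdA P Q, EuclideanDomain.gcdB P Q,
    by linear_combination h1⟩
  -- rank and the kernel of the transpose
  have hrank : (m + n) - S.rank = Module.finrank k (LinearMap.ker (Sᵀ.mulVecLin)) := by
    have h1 := LinearMap.finrank_range_add_finrank_ker (Sᵀ.mulVecLin)
    rw [Module.finrank_fin_fun] at h1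
    have h2 : Sᵀ.rank = S.rank := Matrix.rank_transpose S
    unfold Matrix.rank at h2 ⊢
    omega
  -- the linear-combination map
  set v : Fin (m + n) → k[X] := fun i =>
    if (i : ℕ) < n then P * X ^ (i : ℕ) else Q * X ^ ((i : ℕ) - n) with hv
  set L : (Fin (m + n) → k) →ₗ[k] k[X] := Fintype.linearCombination k v with hL
  have hLapply : ∀ x, L x = ∑ i, x i • v i := fun x => rfl
  have hvS : ∀ i j : Fin (m + n), (v i).coeff (j : ℕ) = S i j := by
    intro i j
    rw [hS]
    by_cases h : (i : ℕ) < n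
    · simp only [hv, if_pos h]
      rw [coeff_mul_X_pow']
    · simp only [hv, if_neg h]
      rw [coeff_mul_X_pow']
  have hLcoeff : ∀ x (j : Fin (m + n)), (L x).coeff (j : ℕ) = ∑ i, S i j * x i := by
    intro x j
    rw [hLapply, finset_sum_coeff]
    refine Finset.sum_congr rfl fun i _ => ?_
    rw [coeff_smul, ← hvS i j, smul_eq_mul, mul_comm]
  have hvmem : ∀ i, v i ∈ degreeLT k (m + n) := by
    intro i
    rw [mem_degreeLT]
    by_cases h : (i : ℕ) < n
    · simp only [hv, if_pos h]
      rw [degree_mul, degree_X_pow, degree_eq_natDegree hP, hPm]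
      exact_mod_cast (by omega : m + (i : ℕ) < m + n)
    · simp only [hv, if_neg h]
      rw [degree_mul, degree_X_pow, degree_eq_natDegree hQ, hQn]
      have hi := i.isLt
      exact_mod_cast (by omega : n + ((i : ℕ) - n) < m + n)
  have hLmem : ∀ x, L x ∈ degreeLT k (m + n) := fun x => by
    rw [hLapply]
    exact Submodule.sum_mem _ fun i _ => Submodule.smul_mem _ _ (hvmem i)
  have hmv : ∀ x (j : Fin (m + n)), Sᵀ.mulVecLin x j = (L x).coeff (j : ℕ) := by
    intro x j
    rw [hLcoeff]
    simp [Matrix.mulVecLin_apply, Matrix.mulVec, Matrix.vecMul, dotProduct, Matrix.transpose_apply, mul_comm]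
  have hkermem : ∀ x, x ∈ LinearMap.ker (Sᵀ.mulVecLin) ↔ L x = 0 := by
    intro x
    rw [LinearMap.mem_ker]
    constructor
    · intro h
      ext j'
      rw [coeff_zero]
      rcases lt_or_ge j' (m + n) with hj | hj
      · have := congrFun h (⟨j', hj⟩ : Fin (m + n))
        rw [Pi.zero_apply] at this
        rw [← hmv x ⟨j', hj⟩]
        exact this
      · refine coeff_eq_zero_of_degree_lt (lt_of_lt_of_le (mem_degreeLT.1 (hLmem x)) ?_)
        exact_mod_cast hj
    · intro h
      funext j
      rw [hmv, h, coeff_zero, Pi.zero_apply]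
  -- key combination lemma
  have hcomb : ∀ A B : k[X], A.degree < (n : ℕ) → B.degree < (m : ℕ) →
      L (fun i => if (i : ℕ) < n then A.coeff (i : ℕ) else B.coeff ((i : ℕ) - n))
        = A * P + B * Q := by
    intro A B hA hB
    rw [hLapply]
    have hterm : ∀ i : Fin (m + n),
        (if (i : ℕ) < n then A.coeff (i : ℕ) else B.coeff ((i : ℕ) - n)) • v i
        = (if (i : ℕ) < n then A.coeff (i : ℕ) • (P * X ^ (i : ℕ)) else 0)
          + (if n ≤ (i : ℕ) then B.coeff ((i : ℕ) - n) • (Q * X ^ ((i : ℕ) - n)) else 0) := by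
      intro i
      by_cases h : (i : ℕ) < n
      · simp [hv, h, Nat.not_le.2 h]
      · simp [hv, h, Nat.le_of_not_lt h]
    simp_rw [hterm, Finset.sum_add_distrib]
    congr 1
    · rw [Fin.sum_univ_eq_sum_range
        (fun i => if i < n then A.coeff i • (P * X ^ i) else 0) (m + n)]
      rw [← Finset.sum_filter]
      rw [show (Finset.range (m + n)).filter (· < n) = Finset.range n by
        ext i; simp only [Finset.mem_filter, Finset.mem_range]; omega]
      exact (aux_mul_eq_sum A P n hA).symm
    · rw [Fin.sum_univ_eq_sum_range
        (fun i => if n ≤ i then B.coeff (i - n) • (Q * X ^ (i - n)) else 0) (m + n)]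
      rw [← Finset.sum_filter]
      rw [show (Finset.range (m + n)).filter (n ≤ ·) = Finset.Ico n (m + n) by
        ext i; simp only [Finset.mem_filter, Finset.mem_range, Finset.mem_Ico]; omega]
      rw [Finset.sum_Ico_eq_sum_range]
      rw [show m + n - n = m by omega]
      rw [aux_mul_eq_sum B Q m hB]
      refine (Finset.sum_congr rfl fun i _ => ?_).symm
      rw [show n + i - n = i by omega]
  -- the map from polynomials of degree < d into the kernel
  set e : degreeLT k d →ₗ[k] (Fin (m + n) → k) :=
  { toFun := fun C => fun i =>
      if (i : ℕ) < n then ((C : k[X]) * q).coeff (i : ℕ)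
      else (-((C : k[X]) * p)).coeff ((i : ℕ) - n)
    map_add' := by
      intro C C'
      funext i
      simp only [Submodule.coe_add, add_mul, coeff_add, coeff_neg, neg_add, Pi.add_apply]
      split_ifs <;> ring
    map_smul' := by
      intro a C
      funext i
      simp only [Submodule.coe_smul, smul_eq_mul, RingHom.id_apply, Pi.smul_apply,
        smul_mul_assoc, coeff_smul, coeff_neg]
      split_ifs <;> simp } with he
  have heapply : ∀ (C : degreeLT k d) (i : Fin (m + n)),
      e C i = if (i : ℕ) < n then ((C : k[X]) * q).coeff (i : ℕ)
        else (-((C : k[X]) * p)).coeff ((i : ℕ) - n) := fun C i => rfl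
  have hCq : ∀ C : degreeLT k d, ((C : k[X]) * q).degree < (n : ℕ) := by
    intro C
    have hC := mem_degreeLT.1 C.2
    by_cases h0 : (C : k[X]) = 0
    · rw [h0, zero_mul, degree_zero]
      exact WithBot.bot_lt_coe n
    · have h1 : (C : k[X]).natDegree < d := by
        rwa [degree_eq_natDegree h0, Nat.cast_lt] at hC
      rw [degree_mul, degree_eq_natDegree h0, degree_eq_natDegree hq0]
      exact_mod_cast (by omega : (C : k[X]).natDegree + q.natDegree < n)
  have hCp : ∀ C : degreeLT k d, ((C : k[X]) * p).degree < (m : ℕ) := by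
    intro C
    have hC := mem_degreeLT.1 C.2
    by_cases h0 : (C : k[X]) = 0
    · rw [h0, zero_mul, degree_zero]
      exact WithBot.bot_lt_coe m
    · have h1 : (C : k[X]).natDegree < d := by
        rwa [degree_eq_natDegree h0, Nat.cast_lt] at hC
      rw [degree_mul, degree_eq_natDegree h0, degree_eq_natDegree hp0]
      exact_mod_cast (by omega : (C : k[X]).natDegree + p.natDegree < m)
  have hemem : ∀ C : degreeLT k d, e C ∈ LinearMap.ker (Sᵀ.mulVecLin) := by
    intro C
    rw [hkermem]
    have hfun : e C = fun i : Fin (m + n) =>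
        if (i : ℕ) < n then ((C : k[X]) * q).coeff (i : ℕ)
        else (-((C : k[X]) * p)).coeff ((i : ℕ) - n) := rfl
    rw [hfun, hcomb ((C : k[X]) * q) (-((C : k[X]) * p)) (hCq C)
      (by rw [degree_neg]; exact hCp C)]
    rw [hp, hq]
    ring
  have hinj : ∀ C : degreeLT k d, e C = 0 → C = 0 := by
    intro C hC
    have hq' : (C : k[X]) * q = 0 := by
      ext j
      rw [coeff_zero]
      rcases lt_or_ge j n with hj | hj
      · have hjmn : j < m + n := by omega
        have := congrFun hC (⟨j, hjmn⟩ : Fin (m + n))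
        rw [heapply, Pi.zero_apply] at this
        simpa [hj] using this
      · exact coeff_eq_zero_of_degree_lt (lt_of_lt_of_le (hCq C) (by exact_mod_cast hj))
    rcases mul_eq_zero.1 hq' with h | h
    · exact Subtype.ext h
    · exact absurd h hq0
  have hsurj : ∀ x, x ∈ LinearMap.ker (Sᵀ.mulVecLin) → ∃ C : degreeLT k d, e C = x := by
    intro x hx
    rw [hkermem] at hx
    set y : ℕ → k := fun i => if h : i < m + n then x ⟨i, h⟩ else 0 with hy
    set A : k[X] := ∑ i ∈ Finset.range n, monomial i (y i) with hA
    set B : k[X] := ∑ i ∈ Finset.range m, monomial i (y (n + i)) with hB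
    have hAcoeff : ∀ j, A.coeff j = if j < n then y j else 0 := by
      intro j
      rw [hA, finset_sum_coeff]
      simp_rw [coeff_monomial]
      rw [Finset.sum_ite_eq' (Finset.range n) j (fun i => y i)]
      simp [Finset.mem_range]
    have hBcoeff : ∀ j, B.coeff j = if j < m then y (n + j) else 0 := by
      intro j
      rw [hB, finset_sum_coeff]
      simp_rw [coeff_monomial]
      rw [Finset.sum_ite_eq' (Finset.range m) j (fun i => y (n + i))]
      simp [Finset.mem_range]
    have hAmem : A ∈ degreeLT k n := by
      rw [hA]
      exact Submodule.sum_mem _ fun i hi => mem_degreeLT.2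
        (lt_of_le_of_lt (degree_monomial_le i _) (by exact_mod_cast Finset.mem_range.1 hi))
    have hAdeg : A.degree < (n : ℕ) := mem_degreeLT.1 hAmem
    have hBmem : B ∈ degreeLT k m := by
      rw [hB]
      exact Submodule.sum_mem _ fun i hi => mem_degreeLT.2
        (lt_of_le_of_lt (degree_monomial_le i _) (by exact_mod_cast Finset.mem_range.1 hi))
    have hBdeg : B.degree < (m : ℕ) := mem_degreeLT.1 hBmem
    have hxfun : x = fun i : Fin (m + n) =>
        if (i : ℕ) < n then A.coeff (i : ℕ) else B.coeff ((i : ℕ) - n) := by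
      funext i
      have hilt := i.isLt
      rcases lt_or_ge (i : ℕ) n with h | h
      · rw [if_pos h, hAcoeff, if_pos h, hy]
        simp [hilt]
      · rw [if_neg (Nat.not_lt.2 h), hBcoeff, if_pos (by omega : (i : ℕ) - n < m), hy]
        have hni : n + ((i : ℕ) - n) = (i : ℕ) := by omega
        rw [hni]
        simp [hilt]
    have hABQ : A * P + B * Q = 0 := by
      rw [← hcomb A B hAdeg hBdeg, ← hxfun]
      exact hx
    have key : A * p + B * q = 0 := by
      have hgz : g * (A * p + B * q) = 0 := by
        have : g * (A * p + B * q) = A * (g * p) + B * (g * q) := by ring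
        rw [this, ← hp, ← hq]
        exact hABQ
      exact (mul_eq_zero.1 hgz).resolve_left hg0
    have hqA : q ∣ A := hcop.symm.dvd_of_dvd_mul_right ⟨-B, by linear_combination key⟩
    obtain ⟨C, hC⟩ := hqA
    have hBC : B = -(C * p) := by
      have hz : q * (B + C * p) = 0 := by
        rw [hC] at key
        linear_combination key
      have := (mul_eq_zero.1 hz).resolve_left hq0
      linear_combination this
    have hCd : C ∈ degreeLT k d := by
      rw [mem_degreeLT]
      by_cases h0 : C = 0
      · rw [h0, degree_zero]
        exact WithBot.bot_lt_coe d
      · have hA0 : A ≠ 0 := by rw [hC]; exact mul_ne_zero hq0 h0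
        have h1 : A.natDegree < n := (natDegree_lt_iff_degree_lt hA0).mpr hAdeg
        rw [hC, natDegree_mul hq0 h0] at h1
        rw [degree_eq_natDegree h0, Nat.cast_lt]
        omega
    refine ⟨⟨C, hCd⟩, ?_⟩
    rw [hxfun]
    funext i
    rw [heapply]
    simp only
    rw [mul_comm C q, ← hC, ← hBC]
  -- assemble
  set e' : degreeLT k d →ₗ[k] LinearMap.ker (Sᵀ.mulVecLin) :=
    e.codRestrict _ hemem with he'
  have hbij : Function.Bijective e' := by
    constructor
    · intro C C' hCC
      have h0 : e (C - C') = 0 := by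
        have : e C = e C' := congrArg Subtype.val hCC
        rw [map_sub, this, sub_self]
      exact sub_eq_zero.1 (hinj _ h0)
    · rintro ⟨x, hx⟩
      obtain ⟨C, hC⟩ := hsurj x hx
      exact ⟨C, Subtype.ext hC⟩
  have hfr : Module.finrank k (LinearMap.ker (Sᵀ.mulVecLin)) = d := by
    rw [← (LinearEquiv.ofBijective e' hbij).finrank_eq,
      (Polynomial.degreeLTEquiv k d).finrank_eq, Module.finrank_fin_fun]
  rw [hrank, hfr]
end

section
/- The probability that a uniformly random matrix M in GL_g(F_2) satisfies det(M - Id) = 0 equals -sum_{r=1}^{g} prod_{j=1}^{r} 1/(1 - 2^j); in particular for g = 1, 2, 3, 4 these values are 1, 2/3, 5/7, 32/45 respectively. -/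
open Matrix MulAction Finset

namespace St14

abbrev F := ZMod 2
abbrev V (g : ℕ) := Fin g → F
abbrev G (g : ℕ) := GL (Fin g) F

/-- tuples of linearly independent vectors -/
abbrev XX (g k : ℕ) := {s : Fin k → V g // LinearIndependent F s}

noncomputable def dM {g : ℕ} (M : G g) : ℕ :=
  Module.finrank F (LinearMap.ker (Matrix.mulVecLin (M : Matrix (Fin g) (Fin g) F) - LinearMap.id))

instance (g k : ℕ) : SMul (G g) (XX g k) where
  smul M s := ⟨fun i => (M : Matrix (Fin g) (Fin g) F).mulVec (s.1 i), by
    have h : Function.Injective (Matrix.mulVecLin (M : Matrix (Fin g) (Fin g) F)) := by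
      simpa [Matrix.mulVecLin_apply, Function.Injective] using
        (Matrix.mulVec_injective_iff_isUnit.2 M.isUnit)
    have := s.2.map' (Matrix.mulVecLin (M : Matrix (Fin g) (Fin g) F))
      (LinearMap.ker_eq_bot.2 h)
    exact this⟩

theorem smul_def {g k : ℕ} (M : G g) (s : XX g k) (i : Fin k) :
    (M • s).1 i = (M : Matrix (Fin g) (Fin g) F).mulVec (s.1 i) := rfl

instance (g k : ℕ) : MulAction (G g) (XX g k) where
  one_smul s := by
    apply Subtype.ext; funext i
    rw [smul_def]
    simp
  mul_smul M N s := by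
    apply Subtype.ext; funext i
    rw [smul_def, smul_def, smul_def]
    simp [Matrix.mulVec_mulVec]

theorem pretrans {g k : ℕ} (hk : k ≤ g) : IsPretransitive (G g) (XX g k) := by
  constructor
  rintro ⟨s, hs⟩ ⟨t, ht⟩
  classical
  set S := Submodule.span F (Set.range s) with hS
  set T := Submodule.span F (Set.range t) with hT
  obtain ⟨S', hS'⟩ := Submodule.exists_isCompl S
  obtain ⟨T', hT'⟩ := Submodule.exists_isCompl T
  let bs : Module.Basis (Fin k) F S := Module.Basis.span hs
  let bt : Module.Basis (Fin k) F T := Module.Basis.span ht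
  have hfin : Module.finrank F S' = Module.finrank F T' := by
    have h1 := Submodule.finrank_add_eq_of_isCompl hS'
    have h2 := Submodule.finrank_add_eq_of_isCompl hT'
    have h3 : Module.finrank F S = k := by
      rw [hS, finrank_span_eq_card hs, Fintype.card_fin]
    have h4 : Module.finrank F T = k := by
      rw [hT, finrank_span_eq_card ht, Fintype.card_fin]
    omega
  let e2 : S' ≃ₗ[F] T' := LinearEquiv.ofFinrankEq _ _ hfin
  let e1 : S ≃ₗ[F] T := bs.equiv bt (Equiv.refl _)
  let e : V g ≃ₗ[F] V g :=
    (Submodule.prodEquivOfIsCompl S S' hS').symm ≪≫ₗ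
      ((e1.prodCongr e2) ≪≫ₗ (Submodule.prodEquivOfIsCompl T T' hT'))
  have hcomp : (e.toLinearMap).comp (e.symm.toLinearMap) = LinearMap.id := by
    ext v; simp
  have hcomp' : (e.symm.toLinearMap).comp (e.toLinearMap) = LinearMap.id := by
    ext v; simp
  let M : G g := ⟨LinearMap.toMatrix' e.toLinearMap, LinearMap.toMatrix' e.symm.toLinearMap,
    by rw [← LinearMap.toMatrix'_comp, hcomp, LinearMap.toMatrix'_id],
    by rw [← LinearMap.toMatrix'_comp, hcomp', LinearMap.toMatrix'_id]⟩
  refine ⟨M, ?_⟩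
  apply Subtype.ext; funext i
  show (M : Matrix (Fin g) (Fin g) F).mulVec (s i) = t i
  have hmv : (M : Matrix (Fin g) (Fin g) F).mulVec (s i) = e (s i) := by
    show (LinearMap.toMatrix' e.toLinearMap).mulVec (s i) = e (s i)
    rw [← Matrix.toLin'_apply, Matrix.toLin'_toMatrix']
    rfl
  rw [hmv]
  have hsi : s i = (bs i : V g) := (congrArg Subtype.val (Module.Basis.span_apply hs i)).symm
  have hti : t i = (bt i : V g) := (congrArg Subtype.val (Module.Basis.span_apply ht i)).symm
  rw [hsi, hti]
  show (Submodule.prodEquivOfIsCompl T T' hT') ((e1.prodCongr e2)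
    ((Submodule.prodEquivOfIsCompl S S' hS').symm (bs i : V g))) = (bt i : V g)
  have h1 : (Submodule.prodEquivOfIsCompl S S' hS').symm (bs i : V g) = ((bs i), (0 : S')) :=
    Submodule.prodEquivOfIsCompl_symm_apply_left _ _ hS' (bs i)
  rw [h1]
  have h2 : (e1.prodCongr e2) ((bs i), (0 : S')) = ((bt i), (0 : T')) := by
    have he1 : e1 (bs i) = bt i := by
      show bs.equiv bt (Equiv.refl _) (bs i) = bt i
      rw [Module.Basis.equiv_apply]; rfl
    simp [LinearEquiv.prodCongr_apply, he1]
  rw [h2]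
  simp [Submodule.coe_prodEquivOfIsCompl']

theorem card_fixed {g k : ℕ} (M : G g) :
    Nat.card (fixedBy (XX g k) M) = ∏ i ∈ range k, (2 ^ (dM M) - 2 ^ i) := by
  classical
  set W := LinearMap.ker (Matrix.mulVecLin (M : Matrix (Fin g) (Fin g) F) - LinearMap.id) with hW
  have hmem : ∀ (s : XX g k), (M • s = s) ↔ ∀ i, s.1 i ∈ W := by
    intro s
    constructor
    · intro h i
      have h2 : (M • s).1 i = s.1 i := by rw [h]
      rw [smul_def] at h2
      simp [hW, LinearMap.mem_ker, Matrix.mulVecLin_apply, sub_eq_zero, h2]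
    · intro h
      apply Subtype.ext; funext i
      have := h i
      simp only [hW, LinearMap.mem_ker, LinearMap.sub_apply, Matrix.mulVecLin_apply,
        LinearMap.id_apply, sub_eq_zero] at this
      rw [smul_def, this]
  let eqv : (fixedBy (XX g k) M) ≃ {u : Fin k → W // LinearIndependent F u} :=
  { toFun := fun p => ⟨fun i => ⟨p.1.1 i, (hmem p.1).1 p.2 i⟩, by
      apply LinearIndependent.of_comp W.subtype
      exact p.1.2⟩
    invFun := fun u => ⟨⟨fun i => (u.1 i : V g),
        u.2.map' W.subtype (Submodule.ker_subtype W)⟩, by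
      show M • _ = _
      rw [hmem]
      intro i
      exact (u.1 i).2⟩
    left_inv := fun p => by
      apply Subtype.ext; apply Subtype.ext; rfl
    right_inv := fun u => by
      apply Subtype.ext; funext i; apply Subtype.ext; rfl }
  rw [Nat.card_congr eqv]
  by_cases hle : k ≤ Module.finrank F W
  · rw [card_linearIndependent hle, ZMod.card]
    rw [← Fin.prod_univ_eq_prod_range (fun i => (2 ^ (dM M) - 2 ^ i))]
    rfl
  · have hempty : IsEmpty {u : Fin k → W // LinearIndependent F u} := by
      constructor
      rintro ⟨u, hu⟩
      have := hu.fintype_card_le_finrank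
      rw [Fintype.card_fin] at this
      omega
    rw [Nat.card_of_isEmpty]
    symm
    apply Finset.prod_eq_zero (i := Module.finrank F W)
    · simp only [Finset.mem_range]; omega
    · show 2 ^ (dM M) - 2 ^ (Module.finrank F W) = 0
      have : dM M = Module.finrank F W := rfl
      rw [this, Nat.sub_self]

theorem dM_le {g : ℕ} (M : G g) : dM M ≤ g := by
  have h1 : dM M ≤ Module.finrank F (V g) := Submodule.finrank_le _
  rwa [Module.finrank_fintype_fun_eq_card, Fintype.card_fin] at h1

theorem xx_nonempty {g k : ℕ} (hk : k ≤ g) : Nonempty (XX g k) := by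
  refine ⟨⟨fun i => Pi.basisFun F (Fin g) (Fin.castLE hk i), ?_⟩⟩
  exact (Pi.basisFun F (Fin g)).linearIndependent.comp _ (Fin.castLE_injective hk)

theorem sum_fixed {g k : ℕ} (hk : k ≤ g) :
    ∑ M : G g, ∏ i ∈ range k, (2 ^ (dM M) - 2 ^ i) = Nat.card (G g) := by
  classical
  haveI := pretrans (g := g) hk
  haveI := xx_nonempty (g := g) hk
  haveI : ∀ M : G g, Fintype (fixedBy (XX g k) M) := fun M => Fintype.ofFinite _
  haveI : Fintype (orbitRel.Quotient (G g) (XX g k)) := Fintype.ofFinite _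
  haveI : Unique (orbitRel.Quotient (G g) (XX g k)) :=
    ((pretransitive_iff_unique_quotient_of_nonempty (G g) (XX g k)).1 ‹_›).some
  have hb := sum_card_fixedBy_eq_card_orbits_mul_card_group (G g) (XX g k)
  rw [Fintype.card_unique, one_mul] at hb
  calc ∑ M : G g, ∏ i ∈ range k, (2 ^ (dM M) - 2 ^ i)
      = ∑ M : G g, Fintype.card (fixedBy (XX g k) M) := by
        refine Finset.sum_congr rfl fun M _ => ?_
        rw [← card_fixed M, Nat.card_eq_fintype_card]
    _ = Fintype.card (G g) := hb
    _ = Nat.card (G g) := (Nat.card_eq_fintype_card).symm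

theorem det_iff {g : ℕ} (M : G g) :
    ((M : Matrix (Fin g) (Fin g) F) - 1).det = 0 ↔ dM M ≠ 0 := by
  have hA : Matrix.mulVecLin ((M : Matrix (Fin g) (Fin g) F) - 1)
      = Matrix.mulVecLin (M : Matrix (Fin g) (Fin g) F) - LinearMap.id := by
    apply LinearMap.ext; intro v
    simp [Matrix.mulVecLin_apply, Matrix.sub_mulVec, Matrix.one_mulVec]
  have h1 : ((M : Matrix (Fin g) (Fin g) F) - 1).det = 0
      ↔ ¬ Function.Injective (Matrix.mulVecLin ((M : Matrix (Fin g) (Fin g) F) - 1)) := by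
    constructor
    · intro h hinj
      have : Function.Injective (((M : Matrix (Fin g) (Fin g) F) - 1).mulVec) := by
        intro x y hxy
        apply hinj
        exact hxy
      have := Matrix.mulVec_injective_iff_isUnit.1 this
      rw [Matrix.isUnit_iff_isUnit_det, h] at this
      simp at this
    · intro h
      by_contra hdet
      apply h
      have : IsUnit ((M : Matrix (Fin g) (Fin g) F) - 1) := by
        rw [Matrix.isUnit_iff_isUnit_det]
        exact isUnit_iff_ne_zero.2 hdet
      have hinj := Matrix.mulVec_injective_iff_isUnit.2 this
      intro x y hxy
      apply hinj
      exact hxy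
  rw [h1, hA, ← LinearMap.ker_eq_bot, not_iff_not]
  exact (Submodule.finrank_eq_zero).symm

end St14

noncomputable def c14 (r : ℕ) : ℚ := ∏ j ∈ Finset.Icc 1 r, 1 / (1 - (2 : ℚ) ^ j)

theorem one_sub_pow_ne {i : ℕ} (hi : 1 ≤ i) : (1 : ℚ) - 2 ^ i ≠ 0 := by
  have : (1 : ℚ) < 2 ^ i := one_lt_pow₀ (by norm_num) (by omega)
  linarith

theorem telescope14 (K : ℕ) (x : ℚ) :
    ∑ k ∈ Finset.range (K + 1), c14 k * ∏ i ∈ Finset.range k, (x - 2 ^ i)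
      = c14 K * ∏ i ∈ Finset.Icc 1 K, (x - 2 ^ i) := by
  induction K with
  | zero => simp [c14]
  | succ K ih =>
    rw [Finset.sum_range_succ, ih]
    have h1 : Finset.range (K + 1) = insert 0 (Finset.Icc 1 K) := by
      ext i; simp; omega
    have h2 : Finset.Icc 1 (K + 1) = insert (K + 1) (Finset.Icc 1 K) := by
      ext i; simp; omega
    have hc : c14 (K + 1) = (1 / (1 - (2 : ℚ) ^ (K + 1))) * c14 K := by
      rw [c14, c14, h2, Finset.prod_insert (by simp)]
    have hne : (1 - (2 : ℚ) ^ (K + 1)) ≠ 0 := one_sub_pow_ne (by omega)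
    have key : c14 K = c14 (K + 1) * (1 - 2 ^ (K + 1)) := by
      rw [hc]; field_simp
    rw [h1, Finset.prod_insert (by simp), h2, Finset.prod_insert (by simp), key]
    ring

theorem delta14 {K j : ℕ} (hj : j ≤ K) :
    ∑ k ∈ Finset.range (K + 1), c14 k * ∏ i ∈ Finset.range k, ((2:ℚ) ^ j - 2 ^ i)
      = if j = 0 then 1 else 0 := by
  rw [telescope14]
  by_cases h : j = 0
  · subst h
    simp only [pow_zero, if_true]
    rw [c14, ← Finset.prod_mul_distrib]
    apply Finset.prod_eq_one
    intro i hi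
    have hne : (1 : ℚ) - 2 ^ i ≠ 0 := one_sub_pow_ne (by simp at hi; omega)
    field_simp
  · rw [if_neg h]
    apply mul_eq_zero_of_right
    apply Finset.prod_eq_zero (i := j)
    · simp; omega
    · ring

theorem cast_prod14 (d k : ℕ) :
    ((∏ i ∈ Finset.range k, (2 ^ d - 2 ^ i) : ℕ) : ℚ)
      = ∏ i ∈ Finset.range k, ((2:ℚ) ^ d - 2 ^ i) := by
  by_cases h : k ≤ d
  · rw [Nat.cast_prod]
    apply Finset.prod_congr rfl
    intro i hi
    simp only [Finset.mem_range] at hi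
    have hle : (2:ℕ) ^ i ≤ 2 ^ d := Nat.pow_le_pow_right (by norm_num) (by omega)
    push_cast [Nat.cast_sub hle]
    ring
  · have hd : d ∈ Finset.range k := by simp; omega
    have h1 : (∏ i ∈ Finset.range k, (2 ^ d - 2 ^ i) : ℕ) = 0 :=
      Finset.prod_eq_zero hd (by simp)
    have h2 : (∏ i ∈ Finset.range k, ((2:ℚ) ^ d - 2 ^ i)) = 0 :=
      Finset.prod_eq_zero hd (by ring)
    rw [h1, h2]
    simp

/-- The probability that a uniformly random `M ∈ GL_g(𝔽₂)` satisfies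
`det(M - Id) = 0` equals `-∑_{r=1}^{g} ∏_{j=1}^{r} 1/(1 - 2^j)`. -/
theorem statement14 (g : ℕ) (hg : 1 ≤ g) :
    (Nat.card {M : GL (Fin g) (ZMod 2) //
        ((M : Matrix (Fin g) (Fin g) (ZMod 2)) - 1).det = 0} : ℚ) /
      (Nat.card (GL (Fin g) (ZMod 2)) : ℚ) =
    - ∑ r ∈ Finset.Icc 1 g, ∏ j ∈ Finset.Icc 1 r, 1 / (1 - (2 : ℚ) ^ j) := by
  classical
  have hN0 : 0 < Nat.card (St14.G g) := Nat.card_pos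
  set N : ℕ := Nat.card (St14.G g) with hN
  -- each column sum equals N
  have hsum : ∀ k ∈ Finset.range (g + 1),
      (∑ M : St14.G g, ∏ i ∈ Finset.range k, ((2:ℚ) ^ (St14.dM M) - 2 ^ i)) = (N : ℚ) := by
    intro k hk
    simp only [Finset.mem_range] at hk
    have h1 := St14.sum_fixed (g := g) (k := k) (by omega)
    calc ∑ M : St14.G g, ∏ i ∈ Finset.range k, ((2:ℚ) ^ (St14.dM M) - 2 ^ i)
        = ∑ M : St14.G g, ((∏ i ∈ Finset.range k, (2 ^ (St14.dM M) - 2 ^ i) : ℕ) : ℚ) := by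
          refine Finset.sum_congr rfl fun M _ => ?_
          rw [cast_prod14]
      _ = ((∑ M : St14.G g, ∏ i ∈ Finset.range k, (2 ^ (St14.dM M) - 2 ^ i) : ℕ) : ℚ) := by
          rw [Nat.cast_sum]
      _ = (N : ℚ) := by rw [h1]
  -- the count of matrices with trivial fixed space
  have hS0 : (Fintype.card {M : St14.G g // St14.dM M = 0} : ℚ)
      = (∑ k ∈ Finset.range (g + 1), c14 k) * (N : ℚ) := by
    calc (Fintype.card {M : St14.G g // St14.dM M = 0} : ℚ)
        = ∑ M : St14.G g, (if St14.dM M = 0 then (1:ℚ) else 0) := by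
          rw [Fintype.card_subtype]
          rw [Finset.sum_boole]
      _ = ∑ M : St14.G g, ∑ k ∈ Finset.range (g + 1),
            c14 k * ∏ i ∈ Finset.range k, ((2:ℚ) ^ (St14.dM M) - 2 ^ i) := by
          refine Finset.sum_congr rfl fun M _ => ?_
          rw [delta14 (St14.dM_le M)]
      _ = ∑ k ∈ Finset.range (g + 1),
            ∑ M : St14.G g, c14 k * ∏ i ∈ Finset.range k, ((2:ℚ) ^ (St14.dM M) - 2 ^ i) := by
          rw [Finset.sum_comm]
      _ = ∑ k ∈ Finset.range (g + 1), c14 k * (N : ℚ) := by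
          refine Finset.sum_congr rfl fun k hk => ?_
          rw [← Finset.mul_sum, hsum k hk]
      _ = (∑ k ∈ Finset.range (g + 1), c14 k) * (N : ℚ) := by
          rw [Finset.sum_mul]
  -- identify the numerator
  have hb : Nat.card {M : GL (Fin g) (ZMod 2) //
        ((M : Matrix (Fin g) (Fin g) (ZMod 2)) - 1).det = 0}
      = Fintype.card {M : St14.G g // St14.dM M ≠ 0} := by
    rw [Nat.card_eq_fintype_card]
    apply Fintype.card_congr
    apply Equiv.subtypeEquivRight
    intro M
    exact St14.det_iff M
  have hsplit : Fintype.card {M : St14.G g // St14.dM M ≠ 0}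
      = N - Fintype.card {M : St14.G g // St14.dM M = 0} := by
    rw [hN, Nat.card_eq_fintype_card]
    exact Fintype.card_subtype_compl _
  have hle : Fintype.card {M : St14.G g // St14.dM M = 0} ≤ N := by
    rw [hN, Nat.card_eq_fintype_card]
    exact Fintype.card_subtype_le _
  have hrange : ∑ k ∈ Finset.range (g + 1), c14 k = 1 + ∑ r ∈ Finset.Icc 1 g, c14 r := by
    have h : Finset.range (g + 1) = insert 0 (Finset.Icc 1 g) := by
      ext i; simp; omega
    rw [h, Finset.sum_insert (by simp)]
    simp [c14]
  have hNne : (N : ℚ) ≠ 0 := by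
    exact_mod_cast Nat.pos_iff_ne_zero.1 hN0
  rw [hb, hsplit, Nat.cast_sub hle, hS0, hrange]
  show ((N:ℚ) - (1 + ∑ r ∈ Finset.Icc 1 g, c14 r) * N) / (N : ℚ)
      = - ∑ r ∈ Finset.Icc 1 g, c14 r
  field_simp
  ring
end

section
/- Let k be a field of characteristic 2 and f ∈ k[x,y] irreducible such that f does not divide ∂f/∂y. Suppose H, G, α ∈ k[x,y] satisfy H^2·x·y·(∂f/∂y) + α·f = G^2 with f not dividing H. Then f divides α + H^2·x. -/
open MvPolynomial

section aux
variable {k : Type*} [Field k] [CharP k 2]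

lemma char2inst : CharP (MvPolynomial (Fin 2) k) 2 := inferInstance

lemma sq_pderiv_zero (i : Fin 2) (g : MvPolynomial (Fin 2) k) :
    pderiv i (g ^ 2) = 0 := by
  haveI := char2inst (k := k)
  rw [pow_two, pderiv_mul, mul_comm, CharTwo.add_self_eq_zero]

lemma pderiv_pderiv_zero (g : MvPolynomial (Fin 2) k) :
    pderiv (1 : Fin 2) (pderiv 1 g) = 0 := by
  haveI := char2inst (k := k)
  induction g using MvPolynomial.induction_on with
  | C a => simp
  | add p q hp hq => simp [hp, hq]
  | mul_X p n hp =>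
    rcases eq_or_ne n 1 with h | h
    · subst h
      simp [pderiv_mul, hp, CharTwo.add_self_eq_zero]
    · have hx : pderiv (1 : Fin 2) (X n : MvPolynomial (Fin 2) k) = 0 := pderiv_X_of_ne h
      simp [pderiv_mul, hp, hx]

end aux

/-- Let `k` have characteristic 2 and `f ∈ k[x,y]` be irreducible with
`f ∤ ∂f/∂y`.  If `H² · x · y · ∂f/∂y + α f = G²` with `f ∤ H`, then
`f ∣ α + H² x`. -/
theorem statement16 (k : Type*) [Field k] [CharP k 2]
    (f : MvPolynomial (Fin 2) k) (hirr : Irreducible f)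
    (hdy : ¬ f ∣ pderiv 1 f)
    (H G α : MvPolynomial (Fin 2) k) (hH : ¬ f ∣ H)
    (heq : H ^ 2 * X 0 * X 1 * pderiv 1 f + α * f = G ^ 2) :
    f ∣ α + H ^ 2 * X 0 := by
  haveI := char2inst (k := k)
  have hd := congrArg (pderiv (1 : Fin 2)) heq
  rw [map_add, sq_pderiv_zero, pderiv_mul, pderiv_mul, pderiv_mul, pderiv_mul,
    sq_pderiv_zero, pderiv_X_of_ne (by decide), pderiv_X_self,
    pderiv_pderiv_zero] at hd
  have key : (α + H ^ 2 * X 0) * pderiv 1 f = pderiv 1 α * f := by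
    have h2 : (2 : MvPolynomial (Fin 2) k) = 0 := CharTwo.two_eq_zero
    linear_combination hd - pderiv 1 α * f * h2
  have hdvd : f ∣ (α + H ^ 2 * X 0) * pderiv 1 f := key ▸ ⟨pderiv 1 α, by ring⟩
  rcases (hirr.prime.dvd_mul.mp hdvd) with h | h
  · exact h
  · exact absurd h hdy
end

section
/- Over a finite field F_q, the number of pairs (P, Q) of polynomials with deg P = m, deg Q = n (m, n ≥ 1) and gcd(P, Q) = 1, where P, Q are monic, equals q^{m+n} - q^{m+n-1}; equivalently the proportion of coprime pairs of monic polynomials of given positive degrees is 1 - 1/q. -/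
open Polynomial Finset

namespace Statement17Aux

variable (k : Type*) [Field k] [Fintype k] [DecidableEq k]

/-- Monic polynomials of degree `d`. -/
abbrev Md (d : ℕ) := {p : k[X] // p.Monic ∧ p.natDegree = d}

/-- Coprime pairs of monic polynomials of degrees `m`, `n`. -/
abbrev Cp (m n : ℕ) := {pq : k[X] × k[X] //
    pq.1.Monic ∧ pq.2.Monic ∧ pq.1.natDegree = m ∧ pq.2.natDegree = n ∧
    IsCoprime pq.1 pq.2}

/-- All pairs of monic polynomials of degrees `m`, `n`. -/
abbrev Ap (m n : ℕ) := {pq : k[X] × k[X] //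
    pq.1.Monic ∧ pq.2.Monic ∧ pq.1.natDegree = m ∧ pq.2.natDegree = n}

noncomputable def mdEquiv (d : ℕ) : Md k d ≃ (Fin d → k) :=
  (monicEquivDegreeLT d).trans (degreeLTEquiv k d).toEquiv

instance (d : ℕ) : Finite (Md k d) := Finite.of_equiv _ (mdEquiv k d).symm

lemma card_Md (d : ℕ) : Nat.card (Md k d) = Fintype.card k ^ d := by
  rw [Nat.card_congr (mdEquiv k d)]
  simp [Nat.card_eq_fintype_card]

def apEquiv (m n : ℕ) : Ap k m n ≃ Md k m × Md k n where
  toFun x := (⟨x.1.1, x.2.1, x.2.2.2.1⟩, ⟨x.1.2, x.2.2.1, x.2.2.2.2⟩)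
  invFun x := ⟨(x.1.1, x.2.1), x.1.2.1, x.2.2.1, x.1.2.2, x.2.2.2⟩
  left_inv x := rfl
  right_inv x := rfl

instance (m n : ℕ) : Finite (Ap k m n) := Finite.of_equiv _ (apEquiv k m n).symm

instance (m n : ℕ) : Finite (Cp k m n) :=
  Finite.of_injective
    (fun x : Cp k m n =>
      (⟨x.1, x.2.1, x.2.2.1, x.2.2.2.1, x.2.2.2.2.1⟩ : Ap k m n))
    fun a b h => by
      apply Subtype.ext
      have := congrArg Subtype.val h
      simpa using this

lemma card_Ap (m n : ℕ) : Nat.card (Ap k m n) = Fintype.card k ^ (m + n) := by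
  rw [Nat.card_congr (apEquiv k m n), Nat.card_prod, card_Md, card_Md, pow_add]

lemma card_Cp_right_zero (a : ℕ) : Nat.card (Cp k a 0) = Fintype.card k ^ a := by
  rw [← card_Md k a]
  apply Nat.card_congr
  refine { toFun := fun x => ⟨x.1.1, x.2.1, x.2.2.2.1⟩
           invFun := fun p =>
             ⟨(p.1, 1), p.2.1, monic_one, p.2.2, natDegree_one, isCoprime_one_right⟩
           left_inv := ?_, right_inv := fun p => rfl }
  rintro ⟨⟨P, Q⟩, hP, hQ, hdm, hdn, hc⟩
  have hQ1 : Q = 1 := eq_one_of_monic_natDegree_zero hQ hdn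
  subst hQ1
  rfl

lemma card_Cp_left_zero (b : ℕ) : Nat.card (Cp k 0 b) = Fintype.card k ^ b := by
  rw [← card_Md k b]
  apply Nat.card_congr
  refine { toFun := fun x => ⟨x.1.2, x.2.2.1, x.2.2.2.2.1⟩
           invFun := fun p =>
             ⟨(1, p.1), monic_one, p.2.1, natDegree_one, p.2.2, isCoprime_one_left⟩
           left_inv := ?_, right_inv := fun p => rfl }
  rintro ⟨⟨P, Q⟩, hP, hQ, hdm, hdn, hc⟩
  have hP1 : P = 1 := eq_one_of_monic_natDegree_zero hP hdm
  subst hP1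
  rfl

/-- Stratification map: multiply a monic polynomial (the gcd) into a coprime pair. -/
noncomputable def strat (m n : ℕ) :
    (Σ d : Fin (min m n + 1), Md k d × Cp k (m - d) (n - d)) → Ap k m n :=
  fun x =>
    ⟨(x.2.1.1 * x.2.2.1.1, x.2.1.1 * x.2.2.1.2), by
      obtain ⟨d, ⟨D, hD, hDd⟩, ⟨⟨A, B⟩, hA, hB, hAd, hBd, hco⟩⟩ := x
      have hd : (d : ℕ) ≤ min m n := Nat.lt_succ_iff.mp d.isLt
      have h1 := Nat.min_le_left m n
      have h2 := Nat.min_le_right m n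
      refine ⟨hD.mul hA, hD.mul hB, ?_, ?_⟩
      · rw [hD.natDegree_mul hA, hDd, hAd]; omega
      · rw [hD.natDegree_mul hB, hDd, hBd]; omega⟩

lemma strat_bij (m n : ℕ) : Function.Bijective (strat k m n) := by
  constructor
  · rintro ⟨d, ⟨D, hD, hDd⟩, ⟨⟨A, B⟩, hA, hB, hAd, hBd, hco⟩⟩
      ⟨d', ⟨D', hD', hDd'⟩, ⟨⟨A', B'⟩, hA', hB', hAd', hBd', hco'⟩⟩ h
    dsimp only at hA hB hAd hBd hco hA' hB' hAd' hBd' hco'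
    have h1 : D * A = D' * A' := congrArg (fun z : Ap k m n => z.val.1) h
    have h2 : D * B = D' * B' := congrArg (fun z : Ap k m n => z.val.2) h
    have hdvd1 : D' ∣ D := by
      obtain ⟨x, y, hxy⟩ := hco
      refine ⟨x * A' + y * B', ?_⟩
      calc D = D * (x * A + y * B) := by rw [hxy, mul_one]
        _ = x * (D * A) + y * (D * B) := by ring
        _ = x * (D' * A') + y * (D' * B') := by rw [h1, h2]
        _ = D' * (x * A' + y * B') := by ring
    have hdvd2 : D ∣ D' := by
      obtain ⟨x, y, hxy⟩ := hco'
      refine ⟨x * A + y * B, ?_⟩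
      calc D' = D' * (x * A' + y * B') := by rw [hxy, mul_one]
        _ = x * (D' * A') + y * (D' * B') := by ring
        _ = x * (D * A) + y * (D * B) := by rw [h1, h2]
        _ = D * (x * A + y * B) := by ring
    have hDD : D = D' :=
      eq_of_monic_of_associated hD hD' (associated_of_dvd_dvd hdvd2 hdvd1)
    subst hDD
    have hd : d = d' := Fin.ext (by rw [← hDd, ← hDd'])
    subst hd
    have hAA : A = A' := mul_left_cancel₀ hD.ne_zero h1
    have hBB : B = B' := mul_left_cancel₀ hD.ne_zero h2
    subst hAA; subst hBB
    rfl
  · rintro ⟨⟨P, Q⟩, hP, hQ, hdm, hdn⟩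
    have hP0 : P ≠ 0 := hP.ne_zero
    set g := EuclideanDomain.gcd P Q with hgdef
    have hg0 : g ≠ 0 := fun h => hP0 ((EuclideanDomain.gcd_eq_zero_iff.mp h).1)
    set c := g.leadingCoeff with hcdef
    have hc0 : c ≠ 0 := leadingCoeff_ne_zero.mpr hg0
    set D := g * C c⁻¹ with hDdef
    have hD : D.Monic := monic_mul_leadingCoeff_inv hg0
    have hgD : g = D * C c := by
      rw [hDdef, mul_assoc, ← C_mul, inv_mul_cancel₀ hc0, C_1, mul_one]
    have hDg : D ∣ g := ⟨C c, hgD⟩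
    obtain ⟨A, hPA⟩ := hDg.trans (EuclideanDomain.gcd_dvd_left P Q)
    obtain ⟨B, hQB⟩ := hDg.trans (EuclideanDomain.gcd_dvd_right P Q)
    have hA : A.Monic := hD.of_mul_monic_left (by rw [← hPA]; exact hP)
    have hB : B.Monic := hD.of_mul_monic_left (by rw [← hQB]; exact hQ)
    have hdmA : D.natDegree + A.natDegree = m := by
      rw [← hD.natDegree_mul hA, ← hPA, hdm]
    have hdnB : D.natDegree + B.natDegree = n := by
      rw [← hD.natDegree_mul hB, ← hQB, hdn]
    have hco : IsCoprime A B := by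
      obtain ⟨u, v, huv⟩ : ∃ u v, A * u + B * v = C c := by
        refine ⟨EuclideanDomain.gcdA P Q, EuclideanDomain.gcdB P Q,
          mul_left_cancel₀ hD.ne_zero ?_⟩
        calc D * (A * EuclideanDomain.gcdA P Q + B * EuclideanDomain.gcdB P Q)
            = (D * A) * EuclideanDomain.gcdA P Q
              + (D * B) * EuclideanDomain.gcdB P Q := by ring
          _ = P * EuclideanDomain.gcdA P Q + Q * EuclideanDomain.gcdB P Q := by
              rw [← hPA, ← hQB]
          _ = g := (EuclideanDomain.gcd_eq_gcd_ab P Q).symm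
          _ = D * C c := hgD
      exact ⟨C c⁻¹ * u, C c⁻¹ * v, by
        calc C c⁻¹ * u * A + C c⁻¹ * v * B = C c⁻¹ * (A * u + B * v) := by ring
          _ = C c⁻¹ * C c := by rw [huv]
          _ = 1 := by rw [← C_mul, inv_mul_cancel₀ hc0, C_1]⟩
    refine ⟨⟨⟨D.natDegree, ?_⟩, ⟨D, hD, rfl⟩, ⟨(A, B), hA, hB, ?_, ?_, hco⟩⟩, ?_⟩
    · have : D.natDegree ≤ min m n := le_min (by omega) (by omega)
      omega
    · show A.natDegree = m - D.natDegree
      omega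
    · show B.natDegree = n - D.natDegree
      omega
    · exact Subtype.ext (Prod.ext hPA.symm hQB.symm)

lemma key (m n : ℕ) :
    Fintype.card k ^ (m + n) =
      ∑ d ∈ Finset.range (min m n + 1),
        Fintype.card k ^ d * Nat.card (Cp k (m - d) (n - d)) := by
  classical
  letI : ∀ d : Fin (min m n + 1), Fintype (Md k d × Cp k (m - d) (n - d)) :=
    fun d => Fintype.ofFinite _
  calc Fintype.card k ^ (m + n) = Nat.card (Ap k m n) := (card_Ap k m n).symm
    _ = Nat.card (Σ d : Fin (min m n + 1), Md k d × Cp k (m - d) (n - d)) :=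
        (Nat.card_eq_of_bijective _ (strat_bij k m n)).symm
    _ = ∑ d : Fin (min m n + 1), Nat.card (Md k d × Cp k (m - d) (n - d)) := by
        rw [Nat.card_eq_fintype_card, Fintype.card_sigma]
        simp [Nat.card_eq_fintype_card]
    _ = ∑ d : Fin (min m n + 1),
          Fintype.card k ^ (d : ℕ) * Nat.card (Cp k (m - d) (n - d)) := by
        refine Finset.sum_congr rfl fun d _ => ?_
        rw [Nat.card_prod, card_Md]
    _ = ∑ d ∈ Finset.range (min m n + 1),
          Fintype.card k ^ d * Nat.card (Cp k (m - d) (n - d)) :=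
        Fin.sum_univ_eq_sum_range
          (fun d => Fintype.card k ^ d * Nat.card (Cp k (m - d) (n - d))) _

lemma step_pow (q a b c : ℕ) (hq : 1 ≤ q) (hcb : c ≤ b) :
    q ^ a * (q ^ b - q ^ c) + q ^ (a + c) = q ^ (a + b) := by
  have h2 : q ^ c ≤ q ^ b := Nat.pow_le_pow_right hq hcb
  have h3 : q ^ (a + c) ≤ q ^ (a + b) := Nat.pow_le_pow_right hq (by omega)
  zify [h2, h3]
  push_cast
  ring

lemma main (N m n : ℕ) (hN : m + n ≤ N) (hm : 1 ≤ m) (hn : 1 ≤ n) :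
    Nat.card (Cp k m n) =
      Fintype.card k ^ (m + n) - Fintype.card k ^ (m + n - 1) := by
  induction N generalizing m n with
  | zero => omega
  | succ N ih =>
    set q := Fintype.card k with hqdef
    have hq : 1 ≤ q := Fintype.card_pos
    set s := min m n with hsdef
    have hsm : s ≤ m := min_le_left m n
    have hsn : s ≤ n := min_le_right m n
    have hs1 : 1 ≤ s := le_min hm hn
    have hkey := key k m n
    rw [← hsdef, ← hqdef, Finset.sum_range_succ'] at hkey
    simp only [pow_zero, one_mul, Nat.sub_zero] at hkey
    have claim : ∀ t, 1 ≤ t → t ≤ s →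
        ∑ i ∈ Finset.Ico (s - t) s,
          q ^ (i + 1) * Nat.card (Cp k (m - (i + 1)) (n - (i + 1))) =
        q ^ ((m + n - s) + (t - 1)) := by
      intro t ht
      induction t, ht using Nat.le_induction with
      | base =>
        intro _
        rw [Finset.sum_eq_sum_Ico_succ_bot (show s - 1 < s by omega),
          show s - 1 + 1 = s from by omega, Finset.Ico_self, Finset.sum_empty,
          add_zero]
        rcases le_total m n with hmn | hmn
        · have hsm' : s = m := by rw [hsdef]; exact min_eq_left hmn
          rw [show m - s = 0 from by omega, card_Cp_left_zero, ← hqdef, ← pow_add]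
          congr 1
          omega
        · have hsn' : s = n := by rw [hsdef]; exact min_eq_right hmn
          rw [show n - s = 0 from by omega, card_Cp_right_zero, ← hqdef, ← pow_add]
          congr 1
          omega
      | succ t ht iht =>
        intro hts
        rw [Finset.sum_eq_sum_Ico_succ_bot (show s - (t + 1) < s by omega),
          show s - (t + 1) + 1 = s - t from by omega, iht (by omega)]
        rw [ih (m - (s - t)) (n - (s - t)) (by omega) (by omega) (by omega)]
        set B := (m - (s - t)) + (n - (s - t)) with hBdef
        rw [show (m + n - s) + (t - 1) = (s - t) + (B - 1) from by omega,
          show (m + n - s) + (t + 1 - 1) = (s - t) + B from by omega]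
        exact step_pow q (s - t) B (B - 1) hq (by omega)
    have hA := claim s hs1 le_rfl
    rw [Nat.sub_self, show Finset.Ico 0 s = Finset.range s from
      (Finset.range_eq_Ico (a := s)).symm, show (m + n - s) + (s - 1) = m + n - 1 from by
      omega] at hA
    rw [hA] at hkey
    omega

end Statement17Aux

/-- Over a finite field `F_q`, the number of coprime pairs `(P, Q)` of monic
polynomials with `deg P = m ≥ 1`, `deg Q = n ≥ 1` equals
`q^{m+n} - q^{m+n-1}`. -/
theorem statement17 (k : Type*) [Field k] [Fintype k] [DecidableEq k]
    (m n : ℕ) (hm : 1 ≤ m) (hn : 1 ≤ n) :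
    Nat.card {pq : k[X] × k[X] //
        pq.1.Monic ∧ pq.2.Monic ∧ pq.1.natDegree = m ∧ pq.2.natDegree = n ∧
        IsCoprime pq.1 pq.2} =
      Fintype.card k ^ (m + n) - Fintype.card k ^ (m + n - 1) := by
  exact Statement17Aux.main k (m + n) m n le_rfl hm hn
end
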